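/- For every x ∈ S^n and every f ∈ H_d with ‖f‖_W = 1, there exists g ∈ Σ_ℝ(x) with ‖f − g‖_W = κ̃(f,x)^{-1}; in particular dist(f, Σ_ℝ(x)) ≤ κ̃(f,x)^{-1}. -/

import Mathlib

open MvPolynomial Finset ENNReal

/-- Bombieri–Weyl inner product of two polynomials (intended for homogeneous
polynomials of the same degree `d`): `⟨Σ aⱼ xʲ, Σ bⱼ xʲ⟩_W = Σ aⱼ bⱼ / binom(d, j)`
where `binom(d, j) = d! / (j₀! ⋯ jₙ!)`. -/
noncomputable def bwInner {m : ℕ} (p q : MvPolynomial (Fin m) ℝ) : ℝ :=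
  ∑ j ∈ p.support ∪ q.support,
    (p.coeff j * q.coeff j) / (Nat.multinomial Finset.univ j : ℝ)

/-- Bombieri–Weyl norm of one polynomial. -/
noncomputable def bwNorm {m : ℕ} (p : MvPolynomial (Fin m) ℝ) : ℝ :=
  Real.sqrt (bwInner p p)

/-- Bombieri–Weyl norm `‖f‖_W` of a system `f = (f_1, …, f_n)`. -/
noncomputable def bwNormSys {n : ℕ} (f : Fin n → MvPolynomial (Fin (n + 1)) ℝ) : ℝ :=
  Real.sqrt (∑ i, bwInner (f i) (f i))

/-- Distance (w.r.t. the Bombieri–Weyl norm) from a system `f` to a set `S` of systems. -/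
noncomputable def bwDist {n : ℕ} (f : Fin n → MvPolynomial (Fin (n + 1)) ℝ)
    (S : Set (Fin n → MvPolynomial (Fin (n + 1)) ℝ)) : ℝ :=
  sInf ((fun g => bwNormSys (f - g)) '' S)

/-- The unit sphere `Sⁿ ⊆ ℝ^{n+1}`. -/
def unitSphere (n : ℕ) : Set (Fin (n + 1) → ℝ) := {x | ∑ k, x k ^ 2 = 1}

/-- `f` belongs to `H_d`: each component is homogeneous of degree `d i`. -/
def IsSystem {n : ℕ} (d : Fin n → ℕ) (f : Fin n → MvPolynomial (Fin (n + 1)) ℝ) : Prop :=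
  ∀ i, (f i).IsHomogeneous (d i)

/-- The derivative `Df(x)` restricted to the tangent space `T_x Sⁿ = x^⊥` is singular,
i.e. it kills some nonzero tangent vector `v`. -/
def SingularAt {n : ℕ} (f : Fin n → MvPolynomial (Fin (n + 1)) ℝ)
    (x : Fin (n + 1) → ℝ) : Prop :=
  ∃ v : Fin (n + 1) → ℝ, v ≠ 0 ∧ (∑ k, v k * x k = 0) ∧
    ∀ i, ∑ k, MvPolynomial.eval x (MvPolynomial.pderiv k (f i)) * v k = 0

/-- `Σ_ℝ(x)`: the systems in `H_d` having `x` as a multiple zero. -/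
def SigmaRx {n : ℕ} (d : Fin n → ℕ) (x : Fin (n + 1) → ℝ) :
    Set (Fin n → MvPolynomial (Fin (n + 1)) ℝ) :=
  {g | IsSystem d g ∧ (∀ i, MvPolynomial.eval x (g i) = 0) ∧ SingularAt g x}

/-- `Σ_ℝ = ⋃_{x ∈ Sⁿ} Σ_ℝ(x)`: the systems in `H_d` with a multiple zero on `Sⁿ`. -/
def SigmaR {n : ℕ} (d : Fin n → ℕ) : Set (Fin n → MvPolynomial (Fin (n + 1)) ℝ) :=
  ⋃ x ∈ unitSphere n, SigmaRx d x

/-- The smallest singular value of `diag(1/√dᵢ) · Df(x)|_{T_x Sⁿ}`, i.e.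
`inf {‖diag(1/√dᵢ)·Df(x) v‖₂ : v ⊥ x, ‖v‖₂ = 1}`.  This equals
`‖f‖_W · μ̃_norm(f,x)⁻¹`, where `μ̃_norm(f,x) = ‖f‖_W ‖(Df(x)|_{T_x Sⁿ})⁻¹ diag(√dᵢ)‖`
(spectral norm, `+∞` when `Df(x)|_{T_x Sⁿ}` is singular); it is `0` exactly
when `μ̃_norm(f,x) = +∞`. -/
noncomputable def sigmaMin {n : ℕ} (d : Fin n → ℕ)
    (f : Fin n → MvPolynomial (Fin (n + 1)) ℝ) (x : Fin (n + 1) → ℝ) : ℝ :=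
  sInf ((fun v => Real.sqrt (∑ i,
      ((∑ k, MvPolynomial.eval x (MvPolynomial.pderiv k (f i)) * v k) / Real.sqrt (d i)) ^ 2)) ''
    {v : Fin (n + 1) → ℝ | (∑ k, v k * x k = 0) ∧ ∑ k, v k ^ 2 = 1})

/-- `κ̃(f, x) = ‖f‖_W / (‖f‖_W² μ̃_norm(f,x)⁻² + ‖f(x)‖₂²)^{1/2}` as an extended
nonnegative real (value `+∞` when `f` has `x` as multiple zero), using
`‖f‖_W² μ̃_norm(f,x)⁻² = (sigmaMin d f x)²`. -/
noncomputable def kappaAt {n : ℕ} (d : Fin n → ℕ)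
    (f : Fin n → MvPolynomial (Fin (n + 1)) ℝ) (x : Fin (n + 1) → ℝ) : ℝ≥0∞ :=
  ENNReal.ofReal (bwNormSys f) /
    ENNReal.ofReal (Real.sqrt (sigmaMin d f x ^ 2 + ∑ i, (MvPolynomial.eval x (f i)) ^ 2))

/-- `κ̃(f) = max_{x ∈ Sⁿ} κ̃(f, x)`. -/
noncomputable def kappa {n : ℕ} (d : Fin n → ℕ)
    (f : Fin n → MvPolynomial (Fin (n + 1)) ℝ) : ℝ≥0∞ :=
  ⨆ x ∈ unitSphere n, kappaAt d f x

namespace BWAux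

variable {m : ℕ}

/-- The linear form `⟨y, ·⟩ = ∑ y_k X_k`. -/
noncomputable def linForm (y : Fin m → ℝ) : MvPolynomial (Fin m) ℝ := ∑ k, C (y k) * X k

lemma bwInner_eq_sum {p q : MvPolynomial (Fin m) ℝ} {s : Finset (Fin m →₀ ℕ)}
    (hp : p.support ⊆ s) (hq : q.support ⊆ s) :
    bwInner p q = ∑ j ∈ s, (p.coeff j * q.coeff j) / (Nat.multinomial Finset.univ j : ℝ) := by
  refine Finset.sum_subset (Finset.union_subset hp hq) (fun j _ hj => ?_)
  rcases (not_or.mp (fun h => hj (Finset.mem_union.mpr h))) with ⟨h1, _⟩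
  rw [MvPolynomial.notMem_support_iff.mp h1, zero_mul, zero_div]

lemma bwInner_eq_sum_left {p q : MvPolynomial (Fin m) ℝ} :
    bwInner p q = ∑ j ∈ p.support, (p.coeff j * q.coeff j) / (Nat.multinomial Finset.univ j : ℝ) := by
  rw [bwInner_eq_sum (s := p.support ∪ q.support) Finset.subset_union_left
    Finset.subset_union_right]
  refine (Finset.sum_subset Finset.subset_union_left (fun j _ hj => ?_)).symm
  rw [MvPolynomial.notMem_support_iff.mp hj, zero_mul, zero_div]

lemma bwInner_comm (p q : MvPolynomial (Fin m) ℝ) : bwInner p q = bwInner q p := by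
  rw [bwInner, bwInner, Finset.union_comm]
  exact Finset.sum_congr rfl fun j _ => by ring

lemma bwInner_add_left (p q r : MvPolynomial (Fin m) ℝ) :
    bwInner (p + q) r = bwInner p r + bwInner q r := by
  classical
  set s := (p + q).support ∪ (p.support ∪ (q.support ∪ r.support)) with hs
  have h0 : (p + q).support ⊆ s := by intro j hj; simp [hs, hj]
  have h1 : p.support ⊆ s := by intro j hj; simp [hs, hj]
  have h2 : q.support ⊆ s := by intro j hj; simp [hs, hj]
  have h3 : r.support ⊆ s := by intro j hj; simp [hs, hj]
  rw [bwInner_eq_sum h0 h3, bwInner_eq_sum h1 h3, bwInner_eq_sum h2 h3,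
    ← Finset.sum_add_distrib]
  exact Finset.sum_congr rfl fun j _ => by rw [MvPolynomial.coeff_add]; ring

lemma bwInner_C_mul_left (a : ℝ) (p q : MvPolynomial (Fin m) ℝ) :
    bwInner (C a * p) q = a * bwInner p q := by
  classical
  have h0 : (C a * p).support ⊆ p.support ∪ q.support := by
    rw [MvPolynomial.C_mul']
    exact (MvPolynomial.support_smul).trans Finset.subset_union_left
  rw [bwInner_eq_sum h0 Finset.subset_union_right,
    bwInner_eq_sum (s := p.support ∪ q.support) Finset.subset_union_left
      Finset.subset_union_right, Finset.mul_sum]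
  exact Finset.sum_congr rfl fun j _ => by rw [MvPolynomial.coeff_C_mul]; ring

lemma sum_finsupp_eq (j : Fin m →₀ ℕ) : j.degree = ∑ k, j k := by
  rw [Finsupp.degree]
  exact Finset.sum_subset (Finset.subset_univ _)
    (fun k _ hk => Finsupp.notMem_support_iff.mp hk)

lemma prod_C_mul_X_pow (y : Fin m → ℝ) (k : Fin m → ℕ) :
    (∏ i, (C (y i) * X i : MvPolynomial (Fin m) ℝ) ^ k i) =
      monomial (Finsupp.equivFunOnFinite.symm k) (∏ i, y i ^ k i) := by
  have h : ∀ i, (C (y i) * X i : MvPolynomial (Fin m) ℝ) ^ k i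
      = C (y i ^ k i) * X i ^ k i := fun i => by rw [mul_pow, MvPolynomial.C_pow]
  rw [Finset.prod_congr rfl fun i _ => h i, Finset.prod_mul_distrib,
    MvPolynomial.monomial_eq, Finsupp.prod_pow, ← map_prod]
  congr 1

lemma coe_of_symm_eq {j : Fin m →₀ ℕ} {k : Fin m → ℕ}
    (h : Finsupp.equivFunOnFinite.symm k = j) : k = ⇑j := by
  rw [← h]; rfl

lemma coeff_linForm_pow (y : Fin m → ℝ) (e : ℕ) (j : Fin m →₀ ℕ) :
    MvPolynomial.coeff j (linForm y ^ e) =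
      if (∑ k, j k) = e then (Nat.multinomial Finset.univ ⇑j : ℝ) * ∏ k, y k ^ j k else 0 := by
  classical
  rw [linForm, Finset.sum_pow_eq_sum_piAntidiag]
  rw [MvPolynomial.coeff_sum]
  have hterm : ∀ k : Fin m → ℕ,
      MvPolynomial.coeff j ((Nat.multinomial Finset.univ k : MvPolynomial (Fin m) ℝ) *
        ∏ i, (C (y i) * X i) ^ k i) =
      if Finsupp.equivFunOnFinite.symm k = j then
        (Nat.multinomial Finset.univ k : ℝ) * ∏ i, y i ^ k i else 0 := by
    intro k
    rw [prod_C_mul_X_pow, ← MvPolynomial.C_eq_coe_nat, MvPolynomial.coeff_C_mul,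
      MvPolynomial.coeff_monomial]
    split_ifs <;> simp
  rw [Finset.sum_congr rfl fun k _ => hterm k]
  by_cases h : (∑ k, j k) = e
  · rw [if_pos h]
    have hj : ⇑j ∈ Finset.piAntidiag Finset.univ e := by
      rw [Finset.mem_piAntidiag]
      exact ⟨h, fun i _ => Finset.mem_univ i⟩
    rw [Finset.sum_eq_single_of_mem _ hj]
    · rw [if_pos (Finsupp.equivFunOnFinite_symm_coe j)]
    · intro k _ hk
      rw [if_neg]
      intro hkj
      exact hk (coe_of_symm_eq hkj)
  · rw [if_neg h]
    refine Finset.sum_eq_zero fun k hk => ?_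
    rw [Finset.mem_piAntidiag] at hk
    rw [if_neg]
    intro hkj
    apply h
    rw [← hk.1]
    refine Finset.sum_congr rfl fun i _ => ?_
    rw [coe_of_symm_eq hkj]

lemma linForm_isHomogeneous (y : Fin m → ℝ) : (linForm y).IsHomogeneous 1 :=
  MvPolynomial.IsHomogeneous.sum _ _ _ fun k _ => MvPolynomial.isHomogeneous_C_mul_X (y k) k

lemma linForm_pow_isHomogeneous (y : Fin m → ℝ) (e : ℕ) :
    ((linForm y) ^ e).IsHomogeneous e := by
  simpa using (linForm_isHomogeneous y).pow e

lemma homog_support_sum {p : MvPolynomial (Fin m) ℝ} {e : ℕ} (hp : p.IsHomogeneous e)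
    {j : Fin m →₀ ℕ} (hj : j ∈ p.support) : ∑ k, j k = e := by
  have h := hp (MvPolynomial.mem_support_iff.mp hj)
  rw [← sum_finsupp_eq, Finsupp.degree_eq_weight_one]
  exact h

lemma multinomial_cast_ne_zero (j : Fin m →₀ ℕ) :
    (Nat.multinomial Finset.univ ⇑j : ℝ) ≠ 0 :=
  Nat.cast_ne_zero.mpr (Nat.multinomial_pos _ _).ne'

/-- The reproducing-kernel property of the Bombieri-Weyl inner product. -/
lemma bwInner_linForm_pow {p : MvPolynomial (Fin m) ℝ} {e : ℕ} (hp : p.IsHomogeneous e)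
    (y : Fin m → ℝ) : bwInner p (linForm y ^ e) = MvPolynomial.eval y p := by
  rw [bwInner_eq_sum_left, MvPolynomial.eval_eq']
  refine Finset.sum_congr rfl fun j hj => ?_
  rw [coeff_linForm_pow, if_pos (homog_support_sum hp hj)]
  field_simp [multinomial_cast_ne_zero j]

lemma sum_sub_single {j : Fin m →₀ ℕ} {k : Fin m} (hk : j k ≠ 0) :
    ∑ l, ((j - Finsupp.single k 1 : Fin m →₀ ℕ) l) = (∑ l, j l) - 1 := by
  classical
  have hle : Finsupp.single k 1 ≤ j := by
    rw [Finsupp.single_le_iff]; omega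
  have hj : (j - Finsupp.single k 1) + Finsupp.single k 1 = j := tsub_add_cancel_of_le hle
  have h2 : ∑ l, j l = (∑ l, ((j - Finsupp.single k 1 : Fin m →₀ ℕ) l)) + ∑ l, Finsupp.single k 1 l := by
    rw [← Finset.sum_add_distrib]
    conv_lhs => rw [← hj]
    exact Finset.sum_congr rfl fun l _ => Finsupp.add_apply _ _ _
  have h3 : ∑ l, Finsupp.single k 1 l = 1 := by
    simp [Finsupp.single_apply]
  omega

lemma multinomial_succ_identity {j : Fin m →₀ ℕ} {k : Fin m} (hk : j k ≠ 0) {e : ℕ}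
    (he : ∑ l, j l = e + 1) :
    (e + 1) * Nat.multinomial Finset.univ (⇑(j - Finsupp.single k 1 : Fin m →₀ ℕ)) =
      j k * Nat.multinomial Finset.univ ⇑j := by
  classical
  set j' := j - Finsupp.single k 1 with hj'
  have hjk : ∀ l, l ≠ k → j' l = j l := fun l hl => by
    rw [hj', Finsupp.tsub_apply, Finsupp.single_apply, if_neg (Ne.symm hl)]
    omega
  have hjkk : j' k = j k - 1 := by
    rw [hj', Finsupp.tsub_apply, Finsupp.single_apply, if_pos rfl]
  have hP : ∏ l, Nat.factorial (j l) = j k * ∏ l, Nat.factorial (j' l) := by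
    rw [← Finset.mul_prod_erase Finset.univ (fun l => Nat.factorial (j l)) (Finset.mem_univ k),
      ← Finset.mul_prod_erase Finset.univ (fun l => Nat.factorial (j' l)) (Finset.mem_univ k)]
    have h1 : ∏ l ∈ Finset.univ.erase k, Nat.factorial (j l)
        = ∏ l ∈ Finset.univ.erase k, Nat.factorial (j' l) :=
      Finset.prod_congr rfl fun l hl => by rw [hjk l (Finset.mem_erase.mp hl).1]
    have hfac : Nat.factorial (j k) = j k * Nat.factorial (j k - 1) :=
      (Nat.mul_factorial_pred hk).symm
    rw [h1, hjkk, hfac]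
    ring
  have hspec : (∏ l, Nat.factorial (j l)) * Nat.multinomial Finset.univ ⇑j =
      Nat.factorial (e + 1) := by
    rw [Nat.multinomial_spec, he]
  have hsum' : ∑ l, j' l = e := by rw [hj', sum_sub_single hk, he]; omega
  have hspec' : (∏ l, Nat.factorial (j' l)) * Nat.multinomial Finset.univ ⇑j' =
      Nat.factorial e := by
    rw [Nat.multinomial_spec, hsum']
  have hPpos : 0 < ∏ l, Nat.factorial (j l) :=
    Finset.prod_pos fun l _ => Nat.factorial_pos _
  refine Nat.eq_of_mul_eq_mul_left hPpos ?_
  calc (∏ l, Nat.factorial (j l)) * ((e + 1) * Nat.multinomial Finset.univ ⇑j')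
      = j k * (e + 1) * ((∏ l, Nat.factorial (j' l)) * Nat.multinomial Finset.univ ⇑j') := by
        rw [hP]; ring
    _ = j k * (e + 1) * Nat.factorial e := by rw [hspec']
    _ = j k * Nat.factorial (e + 1) := by rw [Nat.factorial_succ]; ring
    _ = (∏ l, Nat.factorial (j l)) * (j k * Nat.multinomial Finset.univ ⇑j) := by
        rw [← hspec]; ring

lemma coeff_linForm_pow_mul (x v : Fin m → ℝ) (e : ℕ) (j : Fin m →₀ ℕ) :
    MvPolynomial.coeff j (linForm x ^ e * linForm v) =
      ∑ k, v k * (if j k ≠ 0 then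
        MvPolynomial.coeff (j - Finsupp.single k 1) (linForm x ^ e) else 0) := by
  classical
  have hv : linForm v = ∑ k, (C (v k) * X k : MvPolynomial (Fin m) ℝ) := rfl
  have h1 : linForm x ^ e * linForm v = ∑ k, C (v k) * (linForm x ^ e * X k) := by
    rw [hv, Finset.mul_sum]
    exact Finset.sum_congr rfl fun k _ => by ring
  rw [h1, MvPolynomial.coeff_sum]
  refine Finset.sum_congr rfl fun k _ => ?_
  rw [MvPolynomial.coeff_C_mul, MvPolynomial.coeff_mul_X']
  congr 1
  simp [Finsupp.mem_support_iff]

lemma eval_pderiv_eq (x : Fin m → ℝ) (p : MvPolynomial (Fin m) ℝ) (k : Fin m) :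
    MvPolynomial.eval x (MvPolynomial.pderiv k p) =
      ∑ j ∈ p.support, MvPolynomial.coeff j p * (j k : ℝ) *
        ∏ l, x l ^ ((j - Finsupp.single k 1 : Fin m →₀ ℕ) l) := by
  conv_lhs => rw [p.as_sum]
  rw [map_sum, map_sum]
  refine Finset.sum_congr rfl fun j hj => ?_
  rw [MvPolynomial.pderiv_monomial, MvPolynomial.eval_monomial, Finsupp.prod_pow]


/-- The derivative form of the reproducing-kernel property. -/
lemma bwInner_pow_mul_linForm {p : MvPolynomial (Fin m) ℝ} {e : ℕ}
    (hp : p.IsHomogeneous (e + 1)) (x v : Fin m → ℝ) :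
    (e + 1 : ℝ) * bwInner p (linForm x ^ e * linForm v) =
      ∑ k, MvPolynomial.eval x (MvPolynomial.pderiv k p) * v k := by
  classical
  rw [bwInner_eq_sum_left]
  have hstep : ∀ j ∈ p.support,
      MvPolynomial.coeff j p * MvPolynomial.coeff j (linForm x ^ e * linForm v) /
          (Nat.multinomial Finset.univ ⇑j : ℝ)
        = (∑ k, MvPolynomial.coeff j p * (j k : ℝ) *
            (∏ l, x l ^ ((j - Finsupp.single k 1 : Fin m →₀ ℕ) l)) * v k) / (e + 1) := by
    intro j hj
    have he : ∑ l, j l = e + 1 := homog_support_sum hp hj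
    rw [coeff_linForm_pow_mul, Finset.mul_sum, Finset.sum_div, Finset.sum_div]
    refine Finset.sum_congr rfl fun k _ => ?_
    by_cases hk : j k = 0
    · simp [hk]
    · rw [if_pos hk, coeff_linForm_pow, if_pos (by rw [sum_sub_single hk, he]; omega)]
      have hmulR : (e + 1 : ℝ) * (Nat.multinomial Finset.univ (⇑(j - Finsupp.single k 1 : Fin m →₀ ℕ)) : ℝ)
          = (j k : ℝ) * (Nat.multinomial Finset.univ ⇑j : ℝ) := by
        exact_mod_cast multinomial_succ_identity hk he
      have hratio : (Nat.multinomial Finset.univ (⇑(j - Finsupp.single k 1 : Fin m →₀ ℕ)) : ℝ) /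
          (Nat.multinomial Finset.univ ⇑j : ℝ) = (j k : ℝ) / (e + 1) := by
        rw [div_eq_div_iff (multinomial_cast_ne_zero j) (by positivity)]
        linarith [hmulR]
      calc MvPolynomial.coeff j p * (v k * ((Nat.multinomial Finset.univ
              (⇑(j - Finsupp.single k 1 : Fin m →₀ ℕ)) : ℝ) * ∏ l, x l ^ ((j - Finsupp.single k 1 : Fin m →₀ ℕ) l))) /
            (Nat.multinomial Finset.univ ⇑j : ℝ)
          = MvPolynomial.coeff j p * v k * (∏ l, x l ^ ((j - Finsupp.single k 1 : Fin m →₀ ℕ) l)) *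
            ((Nat.multinomial Finset.univ (⇑(j - Finsupp.single k 1 : Fin m →₀ ℕ)) : ℝ) /
              (Nat.multinomial Finset.univ ⇑j : ℝ)) := by ring
        _ = MvPolynomial.coeff j p * (j k : ℝ) *
              (∏ l, x l ^ ((j - Finsupp.single k 1 : Fin m →₀ ℕ) l)) * v k / (e + 1) := by
            rw [hratio]; ring
  rw [Finset.sum_congr rfl hstep, ← Finset.sum_div, Finset.sum_comm, mul_comm,
    div_mul_cancel₀ _ (by positivity : ((e : ℝ) + 1) ≠ 0)]
  refine Finset.sum_congr rfl fun k _ => ?_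
  rw [eval_pderiv_eq, Finset.sum_mul]

lemma eval_linForm (y z : Fin m → ℝ) :
    MvPolynomial.eval y (linForm z) = ∑ k, z k * y k := by
  simp [linForm]

lemma pderiv_linForm (z : Fin m → ℝ) (k : Fin m) :
    MvPolynomial.pderiv k (linForm z) = C (z k) := by
  classical
  rw [linForm, map_sum]
  rw [Finset.sum_congr rfl (fun l _ => by
    rw [MvPolynomial.pderiv_C_mul, MvPolynomial.pderiv_X])]
  simp [Pi.single_apply, mul_ite]

lemma bwInner_comb (c a : ℝ) (P Q : MvPolynomial (Fin m) ℝ) :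
    bwInner (C c * P + C a * Q) (C c * P + C a * Q) =
      c ^ 2 * bwInner P P + 2 * (c * a) * bwInner P Q + a ^ 2 * bwInner Q Q := by
  have key : ∀ W, bwInner W (C c * P + C a * Q)
      = c * bwInner W P + a * bwInner W Q := fun W => by
    rw [bwInner_comm, bwInner_add_left, bwInner_C_mul_left, bwInner_C_mul_left,
      bwInner_comm P W, bwInner_comm Q W]
  rw [bwInner_add_left, bwInner_C_mul_left, bwInner_C_mul_left, key, key,
    bwInner_comm Q P]
  ring

section sphere

variable {x v : Fin m → ℝ}

lemma eval_linForm_self (hx : ∑ k, x k ^ 2 = 1) :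
    MvPolynomial.eval x (linForm x) = 1 := by
  rw [eval_linForm, ← hx]
  exact Finset.sum_congr rfl fun k _ => (pow_two (x k)).symm

lemma eval_linForm_pow (hx : ∑ k, x k ^ 2 = 1) (e : ℕ) :
    MvPolynomial.eval x ((linForm x) ^ e) = 1 := by
  rw [map_pow, eval_linForm_self hx, one_pow]

lemma eval_linForm_pow_mul (hv1 : ∑ k, v k * x k = 0) (e : ℕ) :
    MvPolynomial.eval x ((linForm x) ^ e * linForm v) = 0 := by
  rw [map_mul, eval_linForm, hv1, mul_zero]

lemma deriv_sum_pow (hx : ∑ k, x k ^ 2 = 1) (hv1 : ∑ k, v k * x k = 0) (e : ℕ) :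
    ∑ k, MvPolynomial.eval x (MvPolynomial.pderiv k ((linForm x) ^ e)) * v k = 0 := by
  have hx' : ∑ k, x k * x k = 1 := by
    rw [← hx]; exact Finset.sum_congr rfl fun k _ => (pow_two (x k)).symm
  have h : ∀ k, MvPolynomial.eval x (MvPolynomial.pderiv k ((linForm x) ^ e)) =
      (e : ℝ) * x k := by
    intro k
    rw [MvPolynomial.pderiv_pow, pderiv_linForm]
    simp [eval_linForm, hx']
  rw [Finset.sum_congr rfl fun k _ => by rw [h k]]
  calc ∑ k, (e : ℝ) * x k * v k = (e : ℝ) * ∑ k, v k * x k := by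
        rw [Finset.mul_sum]; exact Finset.sum_congr rfl fun k _ => by ring
    _ = 0 := by rw [hv1, mul_zero]

lemma deriv_sum_pow_mul (hx : ∑ k, x k ^ 2 = 1) (hv1 : ∑ k, v k * x k = 0)
    (hv2 : ∑ k, v k ^ 2 = 1) (e : ℕ) :
    ∑ k, MvPolynomial.eval x (MvPolynomial.pderiv k ((linForm x) ^ e * linForm v)) * v k
      = 1 := by
  have hx' : ∑ k, x k * x k = 1 := by
    rw [← hx]; exact Finset.sum_congr rfl fun k _ => (pow_two (x k)).symm
  have h : ∀ k, MvPolynomial.eval x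
      (MvPolynomial.pderiv k ((linForm x) ^ e * linForm v)) = v k := by
    intro k
    rw [MvPolynomial.pderiv_mul, MvPolynomial.pderiv_pow, pderiv_linForm, pderiv_linForm,
      map_add]
    simp [eval_linForm, hx', hv1]
  rw [Finset.sum_congr rfl fun k _ => by rw [h k], ← hv2]
  exact Finset.sum_congr rfl fun k _ => (pow_two (v k)).symm

lemma bwInner_pow_mul_self (hx : ∑ k, x k ^ 2 = 1) (hv1 : ∑ k, v k * x k = 0)
    (hv2 : ∑ k, v k ^ 2 = 1) (e : ℕ) :
    bwInner ((linForm x) ^ e * linForm v) ((linForm x) ^ e * linForm v)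
      = 1 / (e + 1 : ℝ) := by
  have hp : ((linForm x) ^ e * linForm v).IsHomogeneous (e + 1) :=
    (linForm_pow_isHomogeneous x e).mul (linForm_isHomogeneous v)
  have h := bwInner_pow_mul_linForm hp x v
  rw [deriv_sum_pow_mul hx hv1 hv2 e] at h
  field_simp at h ⊢
  linarith [h]

end sphere

lemma exists_unit_orthogonal {n : ℕ} (hn : 1 ≤ n) (x : Fin (n + 1) → ℝ) :
    ∃ v : Fin (n + 1) → ℝ, (∑ k, v k * x k = 0) ∧ ∑ k, v k ^ 2 = 1 := by
  classical
  let ℓ : (Fin (n + 1) → ℝ) →ₗ[ℝ] ℝ :=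
    { toFun := fun v => ∑ k, v k * x k
      map_add' := fun a b => by
        simp only [Pi.add_apply, add_mul]
        rw [Finset.sum_add_distrib]
      map_smul' := fun r a => by
        simp only [Pi.smul_apply, smul_eq_mul, RingHom.id_apply]
        rw [Finset.mul_sum]
        exact Finset.sum_congr rfl fun k _ => by ring }
  have hni : ¬ Function.Injective ℓ := by
    intro h
    have h1 := LinearMap.finrank_le_finrank_of_injective h
    rw [Module.finrank_self] at h1
    have h2 : Module.finrank ℝ (Fin (n + 1) → ℝ) = n + 1 := Module.finrank_fin_fun ℝ
    omega
  rw [Function.not_injective_iff] at hni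
  obtain ⟨a, b, hab, hne⟩ := hni
  have hu0 : a - b ≠ 0 := sub_ne_zero_of_ne hne
  set u : Fin (n + 1) → ℝ := a - b with hu
  have hℓu : ∑ k, u k * x k = 0 := by
    have h3 : ℓ u = 0 := by rw [hu, map_sub, hab, sub_self]
    simpa [ℓ] using h3
  obtain ⟨k0, hk0⟩ := Function.ne_iff.mp hu0
  have hk0' : u k0 ≠ 0 := by simpa using hk0
  have hc : 0 < ∑ k, u k ^ 2 :=
    Finset.sum_pos' (fun k _ => sq_nonneg _) ⟨k0, Finset.mem_univ _, by positivity⟩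
  refine ⟨fun k => u k / Real.sqrt (∑ k, u k ^ 2), ?_, ?_⟩
  · rw [Finset.sum_congr rfl fun k (_ : k ∈ Finset.univ) =>
      div_mul_eq_mul_div (u k) (Real.sqrt (∑ k, u k ^ 2)) (x k), ← Finset.sum_div, hℓu,
      zero_div]
  · have hs : ∀ k : Fin (n + 1), (u k / Real.sqrt (∑ k, u k ^ 2)) ^ 2
        = u k ^ 2 / (∑ k, u k ^ 2) := fun k => by
      rw [div_pow, Real.sq_sqrt hc.le]
    rw [Finset.sum_congr rfl fun k _ => hs k, ← Finset.sum_div, div_self hc.ne']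

end BWAux


open BWAux in
/-- For every `x ∈ Sⁿ` and every `f ∈ H_d` with `‖f‖_W = 1`, there exists
`g ∈ Σ_ℝ(x)` with `‖f - g‖_W = κ̃(f,x)⁻¹`; in particular
`dist(f, Σ_ℝ(x)) ≤ κ̃(f,x)⁻¹`. -/
theorem exists_sigmaRx_dist_eq_inv_kappaAt {n : ℕ} (hn : 1 ≤ n) (d : Fin n → ℕ)
    (hd : ∀ i, 1 ≤ d i) (x : Fin (n + 1) → ℝ) (hx : x ∈ unitSphere n)
    (f : Fin n → MvPolynomial (Fin (n + 1)) ℝ) (hf : IsSystem d f)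
    (hf1 : bwNormSys f = 1) :
    (∃ g ∈ SigmaRx d x, ENNReal.ofReal (bwNormSys (f - g)) = (kappaAt d f x)⁻¹) ∧
      ENNReal.ofReal (bwDist f (SigmaRx d x)) ≤ (kappaAt d f x)⁻¹ := by
  classical
  have hx' : ∑ k, x k ^ 2 = 1 := hx
  -- the objective function and the tangent sphere
  set F : (Fin (n + 1) → ℝ) → ℝ := fun v => Real.sqrt (∑ i,
      ((∑ k, MvPolynomial.eval x (MvPolynomial.pderiv k (f i)) * v k) /
        Real.sqrt (d i)) ^ 2) with hFdef
  set T : Set (Fin (n + 1) → ℝ) :=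
    {v : Fin (n + 1) → ℝ | (∑ k, v k * x k = 0) ∧ ∑ k, v k ^ 2 = 1} with hTdef
  have hFc : Continuous F := by
    apply Continuous.sqrt
    apply continuous_finset_sum
    intro i _
    exact ((continuous_finset_sum _ fun k _ =>
      (continuous_const.mul (continuous_apply k))).div_const _).pow 2
  have hTne : T.Nonempty := exists_unit_orthogonal hn x
  have hTc : IsCompact T := by
    have hclosed : IsClosed T := by
      have e1 : Continuous fun v : Fin (n + 1) → ℝ => ∑ k, v k * x k :=
        continuous_finset_sum _ fun k _ => (continuous_apply k).mul continuous_const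
      have e2 : Continuous fun v : Fin (n + 1) → ℝ => ∑ k, v k ^ 2 :=
        continuous_finset_sum _ fun k _ => (continuous_apply k).pow 2
      exact (isClosed_eq e1 continuous_const).inter (isClosed_eq e2 continuous_const)
    refine Metric.isCompact_of_isClosed_isBounded hclosed ?_
    refine (Metric.isBounded_closedBall (x := (0 : Fin (n + 1) → ℝ)) (r := 1)).subset ?_
    intro v hv
    rw [Metric.mem_closedBall, dist_pi_le_iff zero_le_one]
    intro k
    rw [show (0 : Fin (n + 1) → ℝ) k = 0 from rfl, dist_zero_right, Real.norm_eq_abs,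
      ← Real.sqrt_sq_eq_abs]
    refine Real.sqrt_le_one.mpr ?_
    have h1 : v k ^ 2 ≤ ∑ l, v l ^ 2 :=
      Finset.single_le_sum (f := fun l => v l ^ 2) (fun l _ => sq_nonneg _)
        (Finset.mem_univ k)
    rw [hv.2] at h1
    exact h1
  have hmem := (hTc.image hFc).sInf_mem (hTne.image F)
  obtain ⟨v, hvT, hvF⟩ := hmem
  obtain ⟨hv1, hv2⟩ := hvT
  have hσ : sigmaMin d f x = F v := hvF.symm
  have hvne : v ≠ 0 := by
    intro h0
    rw [h0] at hv2
    simp at hv2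
  -- the construction
  set c : Fin n → ℝ := fun i => MvPolynomial.eval x (f i) with hcdef
  set a : Fin n → ℝ := fun i =>
    ∑ k, MvPolynomial.eval x (MvPolynomial.pderiv k (f i)) * v k with hadef
  set h : Fin n → MvPolynomial (Fin (n + 1)) ℝ := fun i =>
    C (c i) * (linForm x ^ (d i)) +
      C (a i) * (linForm x ^ (d i - 1) * linForm v) with hhdef
  set g : Fin n → MvPolynomial (Fin (n + 1)) ℝ := fun i => f i - h i with hgdef
  have he : ∀ i, d i - 1 + 1 = d i := fun i => Nat.succ_pred_eq_of_pos (hd i)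
  have hQhom : ∀ i, ((linForm x ^ (d i - 1) * linForm v) :
      MvPolynomial (Fin (n + 1)) ℝ).IsHomogeneous (d i) := fun i => by
    have := (linForm_pow_isHomogeneous x (d i - 1)).mul (linForm_isHomogeneous v)
    rwa [he i] at this
  -- g is a system
  have hgsys : IsSystem d g := by
    intro i
    refine (hf i).sub ?_
    exact ((linForm_pow_isHomogeneous x (d i)).C_mul _).add ((hQhom i).C_mul _)
  -- x is a zero of g
  have hgzero : ∀ i, MvPolynomial.eval x (g i) = 0 := by
    intro i
    have h1 : MvPolynomial.eval x (h i) = c i := by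
      simp only [hhdef]
      rw [map_add, map_mul, map_mul, MvPolynomial.eval_C, MvPolynomial.eval_C,
        eval_linForm_pow hx', eval_linForm_pow_mul hv1, mul_one, mul_zero, add_zero]
    simp only [hgdef]
    rw [map_sub, h1, sub_self (c i)]
  -- x is a singular zero of g
  have hgsing : SingularAt g x := by
    refine ⟨v, hvne, hv1, fun i => ?_⟩
    have hpt : ∀ k, MvPolynomial.eval x (MvPolynomial.pderiv k (g i)) * v k =
        MvPolynomial.eval x (MvPolynomial.pderiv k (f i)) * v k -
          c i * (MvPolynomial.eval x (MvPolynomial.pderiv k (linForm x ^ (d i))) * v k) -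
          a i * (MvPolynomial.eval x (MvPolynomial.pderiv k
            (linForm x ^ (d i - 1) * linForm v)) * v k) := by
      intro k
      simp only [hgdef, hhdef]
      rw [map_sub, map_add, MvPolynomial.pderiv_C_mul, MvPolynomial.pderiv_C_mul,
        map_sub, map_add, map_mul, map_mul, MvPolynomial.eval_C, MvPolynomial.eval_C]
      ring
    rw [Finset.sum_congr rfl fun k _ => hpt k, Finset.sum_sub_distrib,
      Finset.sum_sub_distrib, ← Finset.mul_sum, ← Finset.mul_sum,
      deriv_sum_pow hx' hv1, deriv_sum_pow_mul hx' hv1 hv2, mul_zero, mul_one,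
      sub_zero]
    exact sub_self (a i)
  have hgmem : g ∈ SigmaRx d x := ⟨hgsys, hgzero, hgsing⟩
  -- the norm computation
  have hfg : f - g = h := by
    funext i
    simp only [Pi.sub_apply, hgdef]
    ring
  have hcast : ∀ i, ((d i - 1 : ℕ) : ℝ) + 1 = (d i : ℝ) := fun i => by
    exact_mod_cast congrArg (Nat.cast (R := ℝ)) (he i)
  have hinner : ∀ i, bwInner (h i) (h i) = c i ^ 2 + a i ^ 2 / d i := by
    intro i
    simp only [hhdef]
    rw [bwInner_comb]
    have hPP : bwInner (linForm x ^ (d i)) (linForm x ^ (d i)) = 1 := by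
      rw [bwInner_linForm_pow (linForm_pow_isHomogeneous x (d i)) x,
        eval_linForm_pow hx']
    have hPQ : bwInner (linForm x ^ (d i)) (linForm x ^ (d i - 1) * linForm v) = 0 := by
      rw [bwInner_comm, bwInner_linForm_pow (hQhom i) x, eval_linForm_pow_mul hv1]
    have hQQ : bwInner (linForm x ^ (d i - 1) * linForm v)
        (linForm x ^ (d i - 1) * linForm v) = 1 / (d i : ℝ) := by
      rw [bwInner_pow_mul_self hx' hv1 hv2 (d i - 1), hcast i]
    rw [hPP, hPQ, hQQ]
    ring
  have hdpos : ∀ i, (0 : ℝ) < d i := fun i => by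
    exact_mod_cast Nat.lt_of_lt_of_le Nat.zero_lt_one (hd i)
  have hFsq : F v ^ 2 = ∑ i, a i ^ 2 / d i := by
    rw [hFdef]
    rw [Real.sq_sqrt (Finset.sum_nonneg fun i _ => sq_nonneg _)]
    refine Finset.sum_congr rfl fun i _ => ?_
    rw [div_pow, Real.sq_sqrt (hdpos i).le]
  have hnorm : bwNormSys (f - g) =
      Real.sqrt (sigmaMin d f x ^ 2 + ∑ i, (MvPolynomial.eval x (f i)) ^ 2) := by
    rw [hfg, bwNormSys]
    congr 1
    rw [Finset.sum_congr rfl fun i _ => hinner i, Finset.sum_add_distrib, hσ, hFsq]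
    ring
  have hkey : ENNReal.ofReal (bwNormSys (f - g)) = (kappaAt d f x)⁻¹ := by
    have hk : kappaAt d f x = (ENNReal.ofReal (Real.sqrt (sigmaMin d f x ^ 2 +
        ∑ i, (MvPolynomial.eval x (f i)) ^ 2)))⁻¹ := by
      rw [kappaAt, hf1, ENNReal.ofReal_one, one_div]
    rw [hk, inv_inv, hnorm]
  refine ⟨⟨g, hgmem, hkey⟩, ?_⟩
  have hbdd : BddBelow ((fun g' => bwNormSys (f - g')) '' SigmaRx d x) := by
    refine ⟨0, fun y hy => ?_⟩
    obtain ⟨w, _, rfl⟩ := hy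
    exact Real.sqrt_nonneg _
  have hmem' : bwNormSys (f - g) ∈ (fun g' => bwNormSys (f - g')) '' SigmaRx d x :=
    ⟨g, hgmem, rfl⟩
  have hle : bwDist f (SigmaRx d x) ≤ bwNormSys (f - g) := csInf_le hbdd hmem'
  calc ENNReal.ofReal (bwDist f (SigmaRx d x))
      ≤ ENNReal.ofReal (bwNormSys (f - g)) := ENNReal.ofReal_le_ofReal hle
    _ = (kappaAt d f x)⁻¹ := hkey
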